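/- arXiv:2105.13438 — 2 statements merged into one kernel-verified Lean document; each statement's English description precedes it below -/
import Mathlib

section
/- If G is a k-regular efficient closed domination graph (i.e., G has a dominating set that is also a 2-packing) with k ≥ 1, then ∂_{2p}(G) = (k-1)·n(G)/(k+1), where n(G) is the order of G. -/
open Finset

variable {V : Type*}

/-- `S` is a 2-packing: closed neighbourhoods of distinct vertices of `S` are disjoint. -/
def IsPacking2 (G : SimpleGraph V) (S : Finset V) : Prop :=
  (S : Set V).Pairwise fun u v =>
    Disjoint (G.neighborSet u ∪ {u}) (G.neighborSet v ∪ {v})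

/-- The external neighbourhood of `S`: vertices outside `S` with a neighbour in `S`. -/
def extN (G : SimpleGraph V) [Fintype V] [DecidableEq V] [DecidableRel G.Adj]
    (S : Finset V) : Finset V :=
  Finset.univ.filter fun v => v ∉ S ∧ ∃ u ∈ S, G.Adj u v

/-- The differential of a set `S`: `|N_e(S)| - |S|`. -/
def diffSet (G : SimpleGraph V) [Fintype V] [DecidableEq V] [DecidableRel G.Adj]
    (S : Finset V) : ℤ :=
  ((extN G S).card : ℤ) - S.card

/-- The 2-packing differential of `G`. -/
noncomputable def pdiff2 (G : SimpleGraph V) [Fintype V] [DecidableEq V]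
    [DecidableRel G.Adj] : ℤ :=
  sSup {d : ℤ | ∃ S : Finset V, IsPacking2 G S ∧ d = diffSet G S}

/-- The packing number of `G`: maximum cardinality of a 2-packing. -/
noncomputable def packNum (G : SimpleGraph V) [Fintype V] : ℕ :=
  sSup {n : ℕ | ∃ S : Finset V, IsPacking2 G S ∧ n = S.card}

/-- `G` has no isolated vertex. -/
def NoIsolated (G : SimpleGraph V) : Prop := ∀ v : V, ∃ u, G.Adj v u

/-- `S` is a dominating set of `G`. -/
def IsDom (G : SimpleGraph V) (S : Finset V) : Prop :=
  ∀ v, v ∉ S → ∃ u ∈ S, G.Adj u v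

section Aux
variable [Fintype V] [DecidableEq V] (G : SimpleGraph V) [DecidableRel G.Adj]

lemma closed_disj {S : Finset V} (hS : IsPacking2 G S) {u v : V} (hu : u ∈ S)
    (hv : v ∈ S) (huv : u ≠ v) :
    Disjoint (insert u (G.neighborFinset u)) (insert v (G.neighborFinset v)) := by
  have := hS hu hv huv
  rw [Finset.disjoint_left]
  intro a ha hb
  have ha' : a ∈ G.neighborSet u ∪ {u} := by
    simp only [Finset.mem_insert, SimpleGraph.mem_neighborFinset] at ha
    rcases ha with h | h
    · exact Or.inr h
    · exact Or.inl h
  have hb' : a ∈ G.neighborSet v ∪ {v} := by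
    simp only [Finset.mem_insert, SimpleGraph.mem_neighborFinset] at hb
    rcases hb with h | h
    · exact Or.inr h
    · exact Or.inl h
  exact this.le_bot ⟨ha', hb'⟩

lemma extN_eq {S : Finset V} (hS : IsPacking2 G S) :
    extN G S = S.biUnion (fun u => G.neighborFinset u) := by
  ext v
  simp only [extN, mem_filter, mem_univ, true_and, mem_biUnion,
    SimpleGraph.mem_neighborFinset]
  constructor
  · rintro ⟨-, u, hu, h⟩; exact ⟨u, hu, h⟩
  · rintro ⟨u, hu, h⟩
    refine ⟨fun hv => ?_, u, hu, h⟩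
    have huv : u ≠ v := fun e => G.loopless.irrefl v (e ▸ h)
    have := closed_disj G hS hu hv huv
    rw [Finset.disjoint_left] at this
    exact this (by simp [SimpleGraph.mem_neighborFinset, h]) (mem_insert_self v _)

lemma extN_card {k : ℕ} (hreg : G.IsRegularOfDegree k) {S : Finset V}
    (hS : IsPacking2 G S) : (extN G S).card = k * S.card := by
  rw [extN_eq G hS, card_biUnion]
  · have : ∀ u ∈ S, (G.neighborFinset u).card = k := fun u _ => by
      rw [SimpleGraph.card_neighborFinset_eq_degree]; exact hreg u
    rw [Finset.sum_congr rfl this, sum_const, smul_eq_mul, mul_comm]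
  · intro u hu v hv huv
    exact (closed_disj G hS hu hv huv).mono (subset_insert _ _) (subset_insert _ _)

lemma packing_card_le {k : ℕ} (hreg : G.IsRegularOfDegree k) {S : Finset V}
    (hS : IsPacking2 G S) : (k + 1) * S.card ≤ Fintype.card V := by
  have h : (S.biUnion (fun u => insert u (G.neighborFinset u))).card
      = (k + 1) * S.card := by
    rw [card_biUnion (fun u hu v hv huv => closed_disj G hS hu hv huv)]
    have : ∀ u ∈ S, (insert u (G.neighborFinset u)).card = k + 1 := by
      intro u _
      rw [card_insert_of_notMem (by simp), SimpleGraph.card_neighborFinset_eq_degree,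
        hreg u]
    rw [Finset.sum_congr rfl this, sum_const, smul_eq_mul, mul_comm]
  calc (k + 1) * S.card = _ := h.symm
    _ ≤ Fintype.card V := by
        simpa using card_le_card (subset_univ (S.biUnion fun u => insert u (G.neighborFinset u)))

lemma dom_card {k : ℕ} (hreg : G.IsRegularOfDegree k) {S : Finset V}
    (hS : IsPacking2 G S) (hD : IsDom G S) :
    (k + 1) * S.card = Fintype.card V := by
  have huniv : S.biUnion (fun u => insert u (G.neighborFinset u)) = univ := by
    ext v
    simp only [mem_biUnion, mem_univ, iff_true, mem_insert,
      SimpleGraph.mem_neighborFinset]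
    by_cases hv : v ∈ S
    · exact ⟨v, hv, Or.inl rfl⟩
    · obtain ⟨u, hu, h⟩ := hD v hv
      exact ⟨u, hu, Or.inr h⟩
  have := card_biUnion (fun u hu v hv huv => closed_disj G hS hu hv huv)
  rw [huniv, card_univ] at this
  rw [this]
  have : ∀ u ∈ S, (insert u (G.neighborFinset u)).card = k + 1 := by
    intro u _
    rw [card_insert_of_notMem (by simp), SimpleGraph.card_neighborFinset_eq_degree,
      hreg u]
  rw [Finset.sum_congr rfl this, sum_const, smul_eq_mul, mul_comm]

end Aux

theorem stmt5 {V : Type*} [Fintype V] [DecidableEq V] (G : SimpleGraph V)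
    [DecidableRel G.Adj] (k : ℕ) (hk : 1 ≤ k) (hreg : G.IsRegularOfDegree k)
    (heff : ∃ S : Finset V, IsPacking2 G S ∧ IsDom G S) :
    (pdiff2 G : ℚ) = ((k : ℚ) - 1) * (Fintype.card V) / ((k : ℚ) + 1) := by
  obtain ⟨S₀, hP₀, hD₀⟩ := heff
  have hn : (k + 1) * S₀.card = Fintype.card V := dom_card G hreg hP₀ hD₀
  have hval : pdiff2 G = ((k : ℤ) - 1) * S₀.card := by
    unfold pdiff2
    apply IsGreatest.csSup_eq
    constructor
    · exact ⟨S₀, hP₀, by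
        unfold diffSet
        rw [extN_card G hreg hP₀]
        push_cast
        ring⟩
    · rintro d ⟨S, hS, rfl⟩
      unfold diffSet
      rw [extN_card G hreg hS]
      have hle : S.card ≤ S₀.card := by
        have h1 := packing_card_le G hreg hS
        rw [← hn] at h1
        exact Nat.le_of_mul_le_mul_left h1 (Nat.succ_pos k)
      have hk1 : (1 : ℤ) ≤ (k : ℤ) := by exact_mod_cast hk
      have hle' : (S.card : ℤ) ≤ S₀.card := by exact_mod_cast hle
      push_cast
      nlinarith
  rw [hval]
  have hn' : ((k : ℚ) + 1) * S₀.card = Fintype.card V := by exact_mod_cast hn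
  have hk0 : (k : ℚ) + 1 ≠ 0 := by positivity
  field_simp
  push_cast
  rw [← hn']
  ring
end

section
/- For any graph G, at least one of the following holds: (i) ∂_{2p}(G) = ∂_p(G), or (ii) 2·∂_{2p}(G) ≥ Δ(G)·∂_p(G) + 2 - (n(G) - 2)·(Δ(G) - 2). -/
open Finset

variable {V : Type*}

/-- The perfect neighbourhood of `S`: vertices outside `S` with exactly one neighbour in `S`. -/
def perfN (G : SimpleGraph V) [Fintype V] [DecidableEq V] [DecidableRel G.Adj]
    (S : Finset V) : Finset V :=
  Finset.univ.filter fun v => v ∉ S ∧ (S.filter fun u => G.Adj u v).card = 1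

/-- The perfect differential of `G`. -/
noncomputable def pdiffP (G : SimpleGraph V) [Fintype V] [DecidableEq V]
    [DecidableRel G.Adj] : ℤ :=
  sSup {d : ℤ | ∃ S : Finset V, d = ((perfN G S).card : ℤ) - S.card}

set_option linter.unusedSectionVars false

section Helpers

variable [Fintype V] [DecidableEq V] (G : SimpleGraph V) [DecidableRel G.Adj]

/-- private perfect neighbours of `v` w.r.t. `S`. -/
def pn (S : Finset V) (v : V) : Finset V :=
  Finset.univ.filter fun w => w ∉ S ∧ S.filter (fun u => G.Adj u w) = {v}

lemma mem_pn {S : Finset V} {v w : V} :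
    w ∈ pn G S v ↔ w ∉ S ∧ S.filter (fun u => G.Adj u w) = {v} := by
  simp [pn]

lemma mem_perfN {S : Finset V} {w : V} :
    w ∈ perfN G S ↔ w ∉ S ∧ (S.filter fun u => G.Adj u w).card = 1 := by
  simp [perfN]

lemma mem_extN {S : Finset V} {w : V} :
    w ∈ extN G S ↔ w ∉ S ∧ ∃ u ∈ S, G.Adj u w := by
  simp [extN]

lemma perfN_eq_biUnion (S : Finset V) : perfN G S = S.biUnion (pn G S) := by
  ext w
  rw [mem_perfN, Finset.mem_biUnion]
  constructor
  · rintro ⟨hw, hc⟩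
    obtain ⟨v, hv⟩ := Finset.card_eq_one.1 hc
    have hvS : v ∈ S := by
      have : v ∈ S.filter (fun u => G.Adj u w) := by rw [hv]; exact Finset.mem_singleton_self v
      exact (Finset.mem_filter.1 this).1
    exact ⟨v, hvS, (mem_pn G).2 ⟨hw, hv⟩⟩
  · rintro ⟨v, _, hw⟩
    rw [mem_pn] at hw
    exact ⟨hw.1, by rw [hw.2]; simp⟩

lemma pn_subset_perfN {S : Finset V} {v : V} (hv : v ∈ S) : pn G S v ⊆ perfN G S := by
  rw [perfN_eq_biUnion]
  exact Finset.subset_biUnion_of_mem (pn G S) hv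

lemma card_perfN (S : Finset V) : (perfN G S).card = ∑ v ∈ S, (pn G S v).card := by
  rw [perfN_eq_biUnion]
  refine Finset.card_biUnion ?_
  intro u hu v hv huv
  rw [Function.onFun, Finset.disjoint_left]
  intro w hwu hwv
  rw [mem_pn] at hwu hwv
  exact huv (Finset.singleton_injective (hwu.2.symm.trans hwv.2))

lemma pn_subset_nbr (S : Finset V) (v : V) : pn G S v ⊆ G.neighborFinset v := by
  intro w hw
  rw [mem_pn] at hw
  have : v ∈ S.filter (fun u => G.Adj u w) := by rw [hw.2]; exact Finset.mem_singleton_self v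
  rw [SimpleGraph.mem_neighborFinset]
  exact (Finset.mem_filter.1 this).2

/-- Key lemma: if `u, v ∈ S` are distinct with intersecting closed neighbourhoods,
then `u` has a neighbour which is not a private perfect neighbour of `u`. -/
lemma card_pn_lt {S : Finset V} {u v : V} (hu : u ∈ S) (hv : v ∈ S) (huv : u ≠ v)
    (hnd : ¬ Disjoint (G.neighborSet u ∪ {u}) (G.neighborSet v ∪ {v})) :
    (pn G S u).card < G.degree u := by
  rw [Set.not_disjoint_iff] at hnd
  obtain ⟨z, hz1, hz2⟩ := hnd
  have key : ∃ z' ∈ G.neighborFinset u, z' ∉ pn G S u := by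
    have hvcase : G.Adj u v → ∃ z' ∈ G.neighborFinset u, z' ∉ pn G S u := by
      intro hadj
      refine ⟨v, (SimpleGraph.mem_neighborFinset G u v).2 hadj, ?_⟩
      rw [mem_pn]
      rintro ⟨hvS, -⟩
      exact hvS hv
    rcases hz1 with hz1 | hz1
    · -- z ∈ N(u)
      rcases hz2 with hz2 | hz2
      · -- z ∈ N(v)
        refine ⟨z, (SimpleGraph.mem_neighborFinset G u z).2 hz1, ?_⟩
        rw [mem_pn]
        rintro ⟨hzS, hfil⟩
        have : v ∈ S.filter (fun a => G.Adj a z) := Finset.mem_filter.2 ⟨hv, hz2⟩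
        rw [hfil, Finset.mem_singleton] at this
        exact huv this.symm
      · -- z = v
        rw [Set.mem_singleton_iff] at hz2
        subst hz2
        exact hvcase hz1
    · -- z = u
      rw [Set.mem_singleton_iff] at hz1
      subst hz1
      rcases hz2 with hz2 | hz2
      · exact hvcase hz2.symm
      · rw [Set.mem_singleton_iff] at hz2
        exact absurd hz2 huv
  obtain ⟨z', hz'1, hz'2⟩ := key
  have hss : pn G S u ⊂ G.neighborFinset u :=
    (Finset.ssubset_iff_of_subset (pn_subset_nbr G S u)).2 ⟨z', hz'1, hz'2⟩
  exact Finset.card_lt_card hss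

lemma perfN_erase_superset {S : Finset V} {v : V} :
    perfN G S \ pn G S v ⊆ perfN G (S.erase v) := by
  intro w hw
  rw [Finset.mem_sdiff, mem_perfN] at hw
  obtain ⟨⟨hwS, hc⟩, hwpn⟩ := hw
  obtain ⟨u, hu⟩ := Finset.card_eq_one.1 hc
  have huv : u ≠ v := by
    rintro rfl
    exact hwpn ((mem_pn G).2 ⟨hwS, hu⟩)
  rw [mem_perfN]
  refine ⟨fun h => hwS (Finset.mem_of_mem_erase h), ?_⟩
  rw [Finset.filter_erase, hu, Finset.erase_eq_of_notMem (by simp [Ne.symm huv])]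
  simp

lemma packing_empty : IsPacking2 G (∅ : Finset V) := by
  simp [IsPacking2]

lemma packing_singleton (v : V) : IsPacking2 G ({v} : Finset V) := by
  simp [IsPacking2]

lemma packing_mono {A B : Finset V} (h : A ⊆ B) (hB : IsPacking2 G B) : IsPacking2 G A :=
  Set.Pairwise.mono (Finset.coe_subset.2 h) hB

lemma packing_extN {A : Finset V} (hA : IsPacking2 G A) :
    extN G A = A.biUnion (fun v => G.neighborFinset v) := by
  ext w
  rw [mem_extN, Finset.mem_biUnion]
  constructor
  · rintro ⟨hwA, u, hu, hadj⟩
    exact ⟨u, hu, (SimpleGraph.mem_neighborFinset G u w).2 hadj⟩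
  · rintro ⟨u, hu, hw⟩
    rw [SimpleGraph.mem_neighborFinset] at hw
    refine ⟨?_, u, hu, hw⟩
    intro hwA
    have hwu : w ≠ u := fun h => G.irrefl (h ▸ hw)
    have h2 : Disjoint (G.neighborSet u ∪ {u}) (G.neighborSet w ∪ {w}) :=
      hA (by exact_mod_cast hu) (by exact_mod_cast hwA) hwu.symm
    exact Set.disjoint_left.1 h2 (Set.mem_union_left _ hw)
      (Set.mem_union_right _ (Set.mem_singleton w))

lemma card_extN_packing {A : Finset V} (hA : IsPacking2 G A) :
    (extN G A).card = ∑ v ∈ A, G.degree v := by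
  rw [packing_extN G hA]
  refine Finset.card_biUnion ?_
  intro u hu v hv huv
  have h2 : Disjoint (G.neighborSet u ∪ {u}) (G.neighborSet v ∪ {v}) :=
    hA (by exact_mod_cast hu) (by exact_mod_cast hv) huv
  rw [Function.onFun, ← Finset.disjoint_coe]
  simp only [SimpleGraph.neighborFinset_def, Set.coe_toFinset]
  exact Disjoint.mono Set.subset_union_left Set.subset_union_left h2

lemma packing_perfN {A : Finset V} (hA : IsPacking2 G A) : perfN G A = extN G A := by
  ext w
  rw [mem_perfN, mem_extN]
  constructor
  · rintro ⟨hwA, hc⟩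
    refine ⟨hwA, ?_⟩
    obtain ⟨u, hu⟩ := Finset.card_eq_one.1 hc
    have : u ∈ A.filter (fun a => G.Adj a w) := by rw [hu]; exact Finset.mem_singleton_self u
    rw [Finset.mem_filter] at this
    exact ⟨u, this.1, this.2⟩
  · rintro ⟨hwA, u, hu, hadj⟩
    refine ⟨hwA, ?_⟩
    rw [Finset.card_eq_one]
    refine ⟨u, ?_⟩
    rw [Finset.eq_singleton_iff_unique_mem]
    refine ⟨Finset.mem_filter.2 ⟨hu, hadj⟩, ?_⟩
    intro u' hu'
    rw [Finset.mem_filter] at hu'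
    by_contra hne
    have h2 : Disjoint (G.neighborSet u' ∪ {u'}) (G.neighborSet u ∪ {u}) :=
      hA (by exact_mod_cast hu'.1) (by exact_mod_cast hu) hne
    exact Set.disjoint_left.1 h2 (Set.mem_union_left _ hu'.2) (Set.mem_union_left _ hadj)

lemma pdiffP_finite : {d : ℤ | ∃ S : Finset V, d = ((perfN G S).card : ℤ) - S.card}.Finite := by
  have : {d : ℤ | ∃ S : Finset V, d = ((perfN G S).card : ℤ) - S.card}
      = Set.range (fun S : Finset V => ((perfN G S).card : ℤ) - S.card) := by
    ext d; simp [eq_comm, Set.range]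
  rw [this]
  exact Set.finite_range _

lemma pdiff2_finite : {d : ℤ | ∃ S : Finset V, IsPacking2 G S ∧ d = diffSet G S}.Finite := by
  refine Set.Finite.subset (Set.finite_range (fun S : Finset V => diffSet G S)) ?_
  rintro d ⟨S, -, rfl⟩
  exact ⟨S, rfl⟩

lemma le_pdiffP (S : Finset V) : ((perfN G S).card : ℤ) - S.card ≤ pdiffP G :=
  le_csSup (pdiffP_finite G).bddAbove ⟨S, rfl⟩

lemma le_pdiff2 {S : Finset V} (hS : IsPacking2 G S) : diffSet G S ≤ pdiff2 G :=
  le_csSup (pdiff2_finite G).bddAbove ⟨S, hS, rfl⟩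

lemma pdiffP_spec : ∃ S : Finset V, pdiffP G = ((perfN G S).card : ℤ) - S.card := by
  have hne : {d : ℤ | ∃ S : Finset V, d = ((perfN G S).card : ℤ) - S.card}.Nonempty :=
    ⟨_, ⟨(∅ : Finset V), rfl⟩⟩
  exact hne.csSup_mem (pdiffP_finite G)

lemma pdiff2_nonneg : 0 ≤ pdiff2 G := by
  have h := le_pdiff2 G (packing_empty G)
  simpa [diffSet, extN] using h

lemma pdiff2_le_pdiffP : pdiff2 G ≤ pdiffP G := by
  refine csSup_le ⟨_, ⟨(∅ : Finset V), packing_empty G, rfl⟩⟩ ?_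
  rintro d ⟨A, hA, rfl⟩
  rw [diffSet, ← packing_perfN G hA]
  exact le_pdiffP G A

lemma maxDegree_le_pdiff2 [Nonempty V] : (G.maxDegree : ℤ) - 1 ≤ pdiff2 G := by
  obtain ⟨v, hv⟩ := G.exists_maximal_degree_vertex
  have h := le_pdiff2 G (packing_singleton G v)
  rw [diffSet, card_extN_packing G (packing_singleton G v)] at h
  simp only [Finset.sum_singleton, Finset.card_singleton] at h
  rw [hv]
  exact_mod_cast h

end Helpers

theorem stmt17 {V : Type*} [Fintype V] [DecidableEq V] (G : SimpleGraph V)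
    [DecidableRel G.Adj] :
    pdiff2 G = pdiffP G ∨
      (G.maxDegree : ℤ) * pdiffP G + 2
          - ((Fintype.card V : ℤ) - 2) * ((G.maxDegree : ℤ) - 2)
        ≤ 2 * pdiff2 G := by
  classical
  by_cases hqp : pdiff2 G = pdiffP G
  · exact Or.inl hqp
  right
  have hqlt : pdiff2 G < pdiffP G := lt_of_le_of_ne (pdiff2_le_pdiffP G) hqp
  obtain ⟨S0, hS0⟩ := pdiffP_spec G
  obtain ⟨S, hSmem, hSmin⟩ := Finset.exists_min_image
    ((Finset.univ : Finset (Finset V)).filter fun T => ((perfN G T).card : ℤ) - T.card = pdiffP G)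
    Finset.card ⟨S0, by simp [hS0.symm]⟩
  rw [Finset.mem_filter] at hSmem
  have hSval : ((perfN G S).card : ℤ) - S.card = pdiffP G := hSmem.2
  have hSmin' : ∀ T : Finset V, ((perfN G T).card : ℤ) - T.card = pdiffP G → S.card ≤ T.card :=
    fun T hT => hSmin T (Finset.mem_filter.2 ⟨Finset.mem_univ T, hT⟩)
  have hp_pos : 0 < pdiffP G := lt_of_le_of_lt (pdiff2_nonneg G) hqlt
  -- every vertex of S has at least 2 private perfect neighbours
  have hpn2 : ∀ v ∈ S, 2 ≤ (pn G S v).card := by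
    intro v hv
    have h1 : ((perfN G (S.erase v)).card : ℤ) - (S.erase v).card ≤ pdiffP G := le_pdiffP G _
    have hS1 : 1 ≤ S.card := Finset.card_pos.2 ⟨v, hv⟩
    have herase : (S.erase v).card = S.card - 1 := Finset.card_erase_of_mem hv
    have hne2 : ((perfN G (S.erase v)).card : ℤ) - (S.erase v).card ≠ pdiffP G := by
      intro h
      have hc := hSmin' _ h
      omega
    have hsub : (pn G S v).card ≤ (perfN G S).card :=
      Finset.card_le_card (pn_subset_perfN G hv)
    have h3 : (perfN G S).card - (pn G S v).card ≤ (perfN G (S.erase v)).card := by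
      calc (perfN G S).card - (pn G S v).card = (perfN G S \ pn G S v).card :=
            (Finset.card_sdiff_of_subset (pn_subset_perfN G hv)).symm
        _ ≤ _ := Finset.card_le_card (perfN_erase_superset G)
    omega
  by_cases hpack : IsPacking2 G S
  · exfalso
    have h := le_pdiff2 G hpack
    rw [diffSet, ← packing_perfN G hpack, hSval] at h
    exact absurd h (not_le.2 hqlt)
  -- take a maximum-cardinality 2-packing inside S
  obtain ⟨A, hAmem, hAmax⟩ := Finset.exists_max_image
    (S.powerset.filter fun B => IsPacking2 G B) Finset.card
    ⟨∅, Finset.mem_filter.2 ⟨Finset.empty_mem_powerset S, packing_empty G⟩⟩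
  rw [Finset.mem_filter, Finset.mem_powerset] at hAmem
  obtain ⟨hAS, hApack⟩ := hAmem
  have hAmax' : ∀ B ⊆ S, IsPacking2 G B → B.card ≤ A.card := fun B h1 h2 =>
    hAmax B (Finset.mem_filter.2 ⟨Finset.mem_powerset.2 h1, h2⟩)
  have hAne : A ≠ S := fun h => hpack (h ▸ hApack)
  obtain ⟨u0, hu0S, hu0A⟩ : ∃ u ∈ S, u ∉ A := by
    by_contra h
    push_neg at h
    exact hAne (Finset.Subset.antisymm hAS h)
  have hcov : ∀ u ∈ S, u ∉ A →
      ∃ v ∈ A, ¬ Disjoint (G.neighborSet u ∪ {u}) (G.neighborSet v ∪ {v}) := by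
    intro u hu hua
    by_contra hcon
    push_neg at hcon
    have hins : IsPacking2 G (insert u A) := by
      rw [IsPacking2, Finset.coe_insert]
      refine (@Set.pairwise_insert_of_symm _ _ _ _ ⟨?_⟩).2 ⟨hApack, ?_⟩
      · intro a b hab
        exact hab.symm
      · intro b hb _
        exact hcon b (Finset.mem_coe.1 hb)
    have hc := hAmax' (insert u A) (Finset.insert_subset hu hAS) hins
    rw [Finset.card_insert_of_notMem hua] at hc
    omega
  obtain ⟨v1, hv1A, hnd1⟩ := hcov u0 hu0S hu0A
  have hu0v1 : u0 ≠ v1 := fun h => hu0A (h ▸ hv1A)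
  have hdeg3 : 3 ≤ G.maxDegree := by
    have hlt := card_pn_lt G hu0S (hAS hv1A) hu0v1 hnd1
    have h2 := hpn2 u0 hu0S
    have h3 := G.degree_le_maxDegree u0
    omega
  have hNE : Nonempty V := ⟨u0⟩
  have hΔq : (G.maxDegree : ℤ) - 1 ≤ pdiff2 G := maxDegree_le_pdiff2 G
  have hD3 : (3 : ℤ) ≤ (G.maxDegree : ℤ) := by exact_mod_cast hdeg3
  -- counting: n = x + s + b
  have hdisj : Disjoint S (perfN G S) := by
    rw [Finset.disjoint_left]
    intro w hw hw2
    exact ((mem_perfN G).1 hw2).1 hw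
  have hxcount : (Finset.univ \ (S ∪ perfN G S)).card + (S.card + (perfN G S).card)
      = Fintype.card V := by
    rw [← Finset.card_union_of_disjoint hdisj,
      Finset.card_sdiff_add_card_eq_card (Finset.subset_univ _), Finset.card_univ]
  have hbsum : (perfN G S).card = ∑ v ∈ S, (pn G S v).card := card_perfN G S
  have hxcountZ : ((Finset.univ \ (S ∪ perfN G S)).card : ℤ) + (S.card + (perfN G S).card)
      = (Fintype.card V : ℤ) := by exact_mod_cast hxcount
  have hxnn : (0 : ℤ) ≤ ((Finset.univ \ (S ∪ perfN G S)).card : ℤ) := Int.natCast_nonneg _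
  rcases Nat.lt_or_ge A.card 2 with hA1 | hA2
  · -- |A| = 1
    have h1le : 1 ≤ A.card := by
      have := hAmax' {u0} (Finset.singleton_subset_iff.2 hu0S) (packing_singleton G u0)
      simpa using this
    have hAcard : A.card = 1 := by omega
    obtain ⟨v0, rfl⟩ := Finset.card_eq_one.1 hAcard
    have hv0S : v0 ∈ S := hAS (Finset.mem_singleton_self v0)
    have hball : ∀ v ∈ S, (pn G S v).card + 1 ≤ G.maxDegree := by
      intro v hv
      have hdegle := G.degree_le_maxDegree v
      rcases eq_or_ne v v0 with rfl | hvv0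
      · have hv1v : v1 = v := Finset.mem_singleton.1 hv1A
        have hnd : ¬ Disjoint (G.neighborSet v ∪ {v}) (G.neighborSet u0 ∪ {u0}) := by
          rw [← hv1v]
          exact fun h => hnd1 h.symm
        have hvu0 : v ≠ u0 := by
          intro h
          apply hu0A
          rw [← h]
          exact Finset.mem_singleton_self v
        have hlt := card_pn_lt G hv hu0S hvu0 hnd
        omega
      · obtain ⟨w, hwA, hndw⟩ := hcov v hv (by simp [hvv0])
        have hw0 : w = v0 := Finset.mem_singleton.1 hwA
        subst hw0
        have hlt := card_pn_lt G hv hv0S hvv0 hndw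
        omega
    have hbs : (perfN G S).card + S.card ≤ S.card * G.maxDegree := by
      rw [hbsum]
      calc ∑ v ∈ S, (pn G S v).card + S.card = ∑ v ∈ S, ((pn G S v).card + 1) := by
            rw [Finset.sum_add_distrib, Finset.sum_const, smul_eq_mul, mul_one]
        _ ≤ ∑ _v ∈ S, G.maxDegree := Finset.sum_le_sum hball
        _ = S.card * G.maxDegree := by rw [Finset.sum_const, smul_eq_mul]
    have hbsZ : ((perfN G S).card : ℤ) + S.card ≤ (S.card : ℤ) * G.maxDegree := by
      exact_mod_cast hbs
    nlinarith [mul_nonneg hxnn (by linarith : (0:ℤ) ≤ (G.maxDegree : ℤ) - 2), hΔq, hSval]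
  · -- |A| ≥ 2
    have hSA : ∀ u ∈ S \ A, (pn G S u).card + 1 ≤ G.maxDegree := by
      intro u hu
      rw [Finset.mem_sdiff] at hu
      obtain ⟨w, hwA, hndw⟩ := hcov u hu.1 hu.2
      have hlt := card_pn_lt G hu.1 (hAS hwA) (fun h => hu.2 (h ▸ hwA)) hndw
      have := G.degree_le_maxDegree u
      omega
    have hPR : ∑ u ∈ S \ A, (pn G S u).card + (S \ A).card ≤ (S \ A).card * G.maxDegree := by
      calc ∑ u ∈ S \ A, (pn G S u).card + (S \ A).card
          = ∑ u ∈ S \ A, ((pn G S u).card + 1) := by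
            rw [Finset.sum_add_distrib, Finset.sum_const, smul_eq_mul, mul_one]
        _ ≤ ∑ _u ∈ S \ A, G.maxDegree := Finset.sum_le_sum hSA
        _ = (S \ A).card * G.maxDegree := by rw [Finset.sum_const, smul_eq_mul]
    have hsplit : ∑ u ∈ S \ A, (pn G S u).card + ∑ u ∈ A, (pn G S u).card
        = ∑ u ∈ S, (pn G S u).card := Finset.sum_sdiff hAS
    have hcSA : (S \ A).card + A.card = S.card := Finset.card_sdiff_add_card_eq_card hAS
    have hqA : ((∑ v ∈ A, (pn G S v).card : ℕ) : ℤ) - A.card ≤ pdiff2 G := by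
      have h := le_pdiff2 G hApack
      rw [diffSet, card_extN_packing G hApack] at h
      have hPA : ∑ v ∈ A, (pn G S v).card ≤ ∑ v ∈ A, G.degree v :=
        Finset.sum_le_sum (fun v _ => Finset.card_le_card (pn_subset_nbr G S v))
      have hPAZ : ((∑ v ∈ A, (pn G S v).card : ℕ) : ℤ) ≤ ((∑ v ∈ A, G.degree v : ℕ) : ℤ) := by
        exact_mod_cast hPA
      linarith
    have hPRZ : ((∑ u ∈ S \ A, (pn G S u).card : ℕ) : ℤ) + (S \ A).card
        ≤ ((S \ A).card : ℤ) * G.maxDegree := by exact_mod_cast hPR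
    have hsplitZ : ((∑ u ∈ S \ A, (pn G S u).card : ℕ) : ℤ)
        + ((∑ u ∈ A, (pn G S u).card : ℕ) : ℤ) = ((perfN G S).card : ℤ) := by
      rw [hbsum]; exact_mod_cast hsplit
    have hcSAZ : (((S \ A).card : ℕ) : ℤ) + A.card = (S.card : ℤ) := by exact_mod_cast hcSA
    have hA2Z : (2 : ℤ) ≤ (A.card : ℤ) := by exact_mod_cast hA2
    have hcZ : (((S \ A).card : ℕ) : ℤ) = (S.card : ℤ) - A.card := by linarith
    rw [hcZ] at hPRZ
    rw [← hSval, ← hxcountZ]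
    have hprod : (0:ℤ) ≤ (2 * (A.card : ℤ) + ((Finset.univ \ (S ∪ perfN G S)).card : ℤ) - 4)
        * ((G.maxDegree : ℤ) - 2) := mul_nonneg (by linarith) (by linarith)
    nlinarith [hqA, hPRZ, hsplitZ, hprod]
end
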